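/- arXiv:1107.2704 — 5 statements merged into one kernel-verified Lean document; each statement's English description precedes it below -/
import Mathlib

section
/- If λ < 0, then the energy functional E(ψ) = ∫|ψ'|² + ∫ξ²|ψ|² + (λ/2)∫|ψ|⁴ − V₀∫cos²(αξ)|ψ|² is bounded from below on the unit L²-sphere Σ₁: for every ψ ∈ Σ₁, E(ψ) ≥ −λ²C² /16 − |V₀|, where C is the Gagliardo–Nirenberg constant with ‖ψ‖₄⁴ ≤ C‖ψ‖₂³‖ψ'‖₂. -/
open MeasureTheory Real

/-- Membership in the energy space `X`. -/
def InX (ψ : ℝ → ℂ) : Prop :=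
  Differentiable ℝ ψ ∧
  Integrable (fun ξ : ℝ => ‖ψ ξ‖ ^ 2) ∧
  Integrable (fun ξ : ℝ => ‖deriv ψ ξ‖ ^ 2) ∧
  Integrable (fun ξ : ℝ => ξ ^ 2 * ‖ψ ξ‖ ^ 2) ∧
  Integrable (fun ξ : ℝ => ‖ψ ξ‖ ^ 4)

/-- The Gross–Pitaevskii energy functional. -/
noncomputable def energy (lam V₀ α : ℝ) (ψ : ℝ → ℂ) : ℝ :=
  (∫ ξ : ℝ, ‖deriv ψ ξ‖ ^ 2) + (∫ ξ : ℝ, ξ ^ 2 * ‖ψ ξ‖ ^ 2)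
    + lam / 2 * (∫ ξ : ℝ, ‖ψ ξ‖ ^ 4)
    - V₀ * (∫ ξ : ℝ, Real.cos (α * ξ) ^ 2 * ‖ψ ξ‖ ^ 2)

theorem energy_lower_bound_attractive (lam V₀ α : ℝ) (hlam : lam < 0)
    (C : ℝ) (hC : 0 < C)
    (hGN : ∀ ψ : ℝ → ℂ, Differentiable ℝ ψ →
        Integrable (fun ξ : ℝ => ‖ψ ξ‖ ^ 2) →
        Integrable (fun ξ : ℝ => ‖deriv ψ ξ‖ ^ 2) →
        (∫ ξ : ℝ, ‖ψ ξ‖ ^ 4) ≤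
          C * (∫ ξ : ℝ, ‖ψ ξ‖ ^ 2) ^ ((3 : ℝ) / 2)
            * (∫ ξ : ℝ, ‖deriv ψ ξ‖ ^ 2) ^ ((1 : ℝ) / 2))
    (ψ : ℝ → ℂ) (hX : InX ψ) (hQ : (∫ ξ : ℝ, ‖ψ ξ‖ ^ 2) = 1) :
    energy lam V₀ α ψ ≥ -(lam ^ 2 * C ^ 2) / 16 - |V₀| := by

  obtain ⟨hdiff, hL2, hD2, hxi, hL4⟩ := hX
  set a := (∫ ξ : ℝ, ‖deriv ψ ξ‖ ^ 2) with ha_def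
  set b := (∫ ξ : ℝ, ξ ^ 2 * ‖ψ ξ‖ ^ 2) with hb_def
  set d := (∫ ξ : ℝ, ‖ψ ξ‖ ^ 4) with hd_def
  set p := (∫ ξ : ℝ, Real.cos (α * ξ) ^ 2 * ‖ψ ξ‖ ^ 2) with hp_def
  have ha : 0 ≤ a := integral_nonneg fun ξ => by positivity
  have hb : 0 ≤ b := integral_nonneg fun ξ => by positivity
  -- bound on d
  have hGNψ := hGN ψ hdiff hL2 hD2
  rw [hQ, Real.one_rpow, mul_one] at hGNψ
  have hd : d ≤ C * a ^ ((1:ℝ)/2) := hGNψ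
  -- potential term bound : p ≤ 1 and p ≥ 0
  have hcont : Continuous fun ξ : ℝ => Real.cos (α * ξ) ^ 2 * ‖ψ ξ‖ ^ 2 := by
    have := hdiff.continuous
    fun_prop
  have hpint : Integrable (fun ξ : ℝ => Real.cos (α * ξ) ^ 2 * ‖ψ ξ‖ ^ 2) := by
    refine hL2.mono' hcont.aestronglyMeasurable ?_
    filter_upwards with ξ
    have h1 : Real.cos (α * ξ) ^ 2 ≤ 1 := by
      have := Real.neg_one_le_cos (α * ξ)
      have := Real.cos_le_one (α * ξ)
      nlinarith
    have h2 : (0:ℝ) ≤ ‖ψ ξ‖ ^ 2 := by positivity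
    rw [Real.norm_eq_abs, abs_of_nonneg (by positivity)]
    nlinarith
  have hp1 : p ≤ 1 := by
    rw [← hQ]
    refine integral_mono hpint hL2 fun ξ => ?_
    have h1 : Real.cos (α * ξ) ^ 2 ≤ 1 := by
      have := Real.neg_one_le_cos (α * ξ)
      have := Real.cos_le_one (α * ξ)
      nlinarith
    have h2 : (0:ℝ) ≤ ‖ψ ξ‖ ^ 2 := by positivity
    nlinarith
  have hp0 : 0 ≤ p := integral_nonneg fun ξ => by positivity
  have hVp : V₀ * p ≤ |V₀| := by
    calc V₀ * p ≤ |V₀ * p| := le_abs_self _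
    _ = |V₀| * p := by rw [abs_mul, abs_of_nonneg hp0]
    _ ≤ |V₀| * 1 := by
        exact mul_le_mul_of_nonneg_left hp1 (abs_nonneg _)
    _ = |V₀| := mul_one _
  -- square root manipulation
  set s := a ^ ((1:ℝ)/2) with hs_def
  have hs0 : 0 ≤ s := Real.rpow_nonneg ha _
  have hs2 : s ^ 2 = a := by
    rw [hs_def, ← Real.rpow_natCast (a ^ ((1:ℝ)/2)) 2, ← Real.rpow_mul ha]
    norm_num
  have hquad : a + lam / 2 * (C * s) ≥ -(lam ^ 2 * C ^ 2) / 16 := by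
    nlinarith [sq_nonneg (s + lam * C / 4)]
  have hlamd : lam / 2 * d ≥ lam / 2 * (C * s) := by
    apply mul_le_mul_of_nonpos_left hd (by linarith)
  unfold energy
  rw [← ha_def, ← hb_def, ← hd_def, ← hp_def]
  linarith
end

section
/- Let ψ ∈ H¹(ℝ) be a complex-valued solution of −ψ'' + ξ²ψ + λ|ψ|²ψ − V₀cos²(αξ)ψ = μψ. Then there exist a real-valued solution U of the same equation and θ ∈ ℝ such that ψ(ξ) = e^{iθ} U(ξ) for all ξ. -/
open MeasureTheory Real

section Aux
open Set

lemma ode_zero_forward (q h : ℝ → ℝ) (hq : Continuous q)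
    (hd : Differentiable ℝ h) (hd' : Differentiable ℝ (deriv h))
    (heq : ∀ t, deriv (deriv h) t = q t * h t) (x₀ : ℝ)
    (h0 : h x₀ = 0) (h0' : deriv h x₀ = 0) : ∀ t, x₀ ≤ t → h t = 0 := by
  intro b hb
  set E : ℝ → ℝ := fun t => h t ^ 2 + deriv h t ^ 2 with hE
  set E' : ℝ → ℝ := fun t => 2 * (1 + q t) * (h t * deriv h t) with hE'
  have hEd : ∀ t, HasDerivAt E (E' t) t := by
    intro t
    have h1 : HasDerivAt (fun t => h t ^ 2) (2 * h t * deriv h t) t := by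
      simpa using ((hd t).hasDerivAt.fun_pow 2)
    have h2 : HasDerivAt (fun t => deriv h t ^ 2) (2 * deriv h t * deriv (deriv h) t) t := by
      simpa using ((hd' t).hasDerivAt.fun_pow 2)
    have := h1.fun_add h2
    exact this.congr_deriv (by simp only [hE']; rw [heq t]; ring)
  obtain ⟨C, hC⟩ := (isCompact_Icc (a := x₀) (b := b)).exists_bound_of_continuousOn
    (hq.continuousOn)
  have hC0 : 0 ≤ C := le_trans (norm_nonneg _) (hC x₀ ⟨le_refl _, hb⟩)
  have key := norm_le_gronwallBound_of_norm_deriv_right_le (f := E) (f' := E')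
    (δ := 0) (K := 1 + C) (ε := 0) (a := x₀) (b := b)
    (fun t _ => ((hEd t).continuousAt).continuousWithinAt)
    (fun t _ => (hEd t).hasDerivWithinAt)
    (by simp [hE, h0, h0'])
    ?_ b ⟨hb, le_refl _⟩
  · rw [gronwallBound_ε0_δ0] at key
    have hEb : E b = 0 := by simpa using key
    simp only [hE] at hEb
    have : h b ^ 2 = 0 := by nlinarith [sq_nonneg (h b), sq_nonneg (deriv h b)]
    exact pow_eq_zero_iff (n := 2) (by norm_num) |>.mp this
  · intro t ht
    have hqt : |q t| ≤ C := by simpa [Real.norm_eq_abs] using hC t ⟨ht.1, le_of_lt ht.2⟩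
    have hEnn : ‖E t‖ = E t := by
      rw [Real.norm_eq_abs, abs_of_nonneg]; positivity
    rw [hEnn]
    have h1 : |1 + q t| ≤ 1 + C := by
      cases abs_le.mp hqt with | intro l r => rw [abs_le]; constructor <;> linarith
    have h2 : |h t * deriv h t| ≤ (h t ^ 2 + deriv h t ^ 2) / 2 := by
      rw [abs_le]
      constructor <;> nlinarith [sq_nonneg (h t - deriv h t), sq_nonneg (h t + deriv h t)]
    have heq2 : ‖E' t‖ = 2 * |1 + q t| * |h t * deriv h t| := by
      rw [Real.norm_eq_abs, hE']
      rw [abs_mul, abs_mul]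
      norm_num
    rw [heq2]
    have := mul_le_mul h1 h2 (abs_nonneg _) (by linarith)
    simp only [hE]
    nlinarith [abs_nonneg (h t * deriv h t), sq_nonneg (h t), sq_nonneg (deriv h t)]

lemma ode_zero (q h : ℝ → ℝ) (hq : Continuous q)
    (hd : Differentiable ℝ h) (hd' : Differentiable ℝ (deriv h))
    (heq : ∀ t, deriv (deriv h) t = q t * h t) (x₀ : ℝ)
    (h0 : h x₀ = 0) (h0' : deriv h x₀ = 0) : ∀ t, h t = 0 := by
  intro t
  rcases le_total x₀ t with hle | hle
  · exact ode_zero_forward q h hq hd hd' heq x₀ h0 h0' t hle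
  · -- reflection
    set c := 2 * x₀ with hc
    set g : ℝ → ℝ := fun s => h (c - s) with hg
    set q' : ℝ → ℝ := fun s => q (c - s) with hq'
    have hgd : Differentiable ℝ g := hd.comp ((differentiable_const c).sub differentiable_id)
    have hderg : deriv g = fun s => -(deriv h (c - s)) := by
      funext s; exact deriv_comp_const_sub (f := h) (a := c) (x := s)
    have hgd' : Differentiable ℝ (deriv g) := by
      rw [hderg]
      exact (hd'.comp ((differentiable_const c).sub differentiable_id)).neg
    have hderg2 : ∀ s, deriv (deriv g) s = q' s * g s := by
      intro s
      rw [hderg]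
      have : deriv (fun s => -(deriv h (c - s))) s
          = -(deriv (fun s => deriv h (c - s)) s) := deriv.neg
      rw [this, deriv_comp_const_sub (f := deriv h) (a := c) (x := s), neg_neg, heq]
    have hx : g x₀ = 0 := by simp [hg, hc, two_mul, h0]
    have hx' : deriv g x₀ = 0 := by
      rw [hderg]; simp [hc, two_mul, h0']
    have := ode_zero_forward q' g (hq.comp (continuous_const.sub continuous_id))
      hgd hgd' hderg2 x₀ hx hx' (c - t) (by simp [hc]; linarith)
    simpa [hg, hc] using this

lemma deriv_comp_re (f : ℝ → ℂ) (hf : Differentiable ℝ f) :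
    deriv (fun ξ => (f ξ).re) = fun ξ => (deriv f ξ).re := by
  funext ξ
  exact (Complex.reCLM.hasFDerivAt.comp_hasDerivAt ξ (hf ξ).hasDerivAt).deriv

lemma deriv_comp_im (f : ℝ → ℂ) (hf : Differentiable ℝ f) :
    deriv (fun ξ => (f ξ).im) = fun ξ => (deriv f ξ).im := by
  funext ξ
  exact (Complex.imCLM.hasFDerivAt.comp_hasDerivAt ξ (hf ξ).hasDerivAt).deriv

lemma diff_comp_re (f : ℝ → ℂ) (hf : Differentiable ℝ f) :
    Differentiable ℝ (fun ξ => (f ξ).re) :=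
  Complex.reCLM.differentiable.comp hf

lemma diff_comp_im (f : ℝ → ℂ) (hf : Differentiable ℝ f) :
    Differentiable ℝ (fun ξ => (f ξ).im) :=
  Complex.imCLM.differentiable.comp hf

lemma norm_sq_c (z : ℂ) : ‖z‖ ^ 2 = z.re ^ 2 + z.im ^ 2 := by
  rw [Complex.sq_norm, Complex.normSq_apply]; ring

end Aux

/-- `ψ : ℝ → ℂ` is an `H¹` solution of the stationary Gross–Pitaevskii equation
`-ψ'' + ξ²ψ + λ|ψ|²ψ - V₀cos²(αξ)ψ = μψ`. -/
def IsGPSolutionC (μ lam V₀ α : ℝ) (ψ : ℝ → ℂ) : Prop :=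
  Differentiable ℝ ψ ∧ Differentiable ℝ (deriv ψ) ∧
  Integrable (fun ξ : ℝ => ‖ψ ξ‖ ^ 2) ∧
  Integrable (fun ξ : ℝ => ‖deriv ψ ξ‖ ^ 2) ∧
  ∀ ξ : ℝ, -deriv (deriv ψ) ξ + (ξ ^ 2 : ℝ) * ψ ξ + (lam : ℂ) * (‖ψ ξ‖ ^ 2 : ℝ) * ψ ξ
      - (V₀ : ℂ) * (Real.cos (α * ξ) ^ 2 : ℝ) * ψ ξ = (μ : ℂ) * ψ ξ

/-- `U : ℝ → ℝ` is a real `H¹` solution of the same equation. -/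
def IsGPSolutionR (μ lam V₀ α : ℝ) (U : ℝ → ℝ) : Prop :=
  Differentiable ℝ U ∧ Differentiable ℝ (deriv U) ∧
  Integrable (fun ξ : ℝ => U ξ ^ 2) ∧
  Integrable (fun ξ : ℝ => deriv U ξ ^ 2) ∧
  ∀ ξ : ℝ, -deriv (deriv U) ξ + ξ ^ 2 * U ξ + lam * (U ξ ^ 2) * U ξ
      - V₀ * Real.cos (α * ξ) ^ 2 * U ξ = μ * U ξ

theorem complex_solution_is_phase_times_real (μ lam V₀ α : ℝ) (ψ : ℝ → ℂ)
    (hψ : IsGPSolutionC μ lam V₀ α ψ) :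
    ∃ (U : ℝ → ℝ) (θ : ℝ), IsGPSolutionR μ lam V₀ α U ∧
      ∀ ξ : ℝ, ψ ξ = Complex.exp (Complex.I * θ) * (U ξ : ℂ) := by
  obtain ⟨hψ1, hψ2, hI1, hI2, hEq⟩ := hψ
  set u : ℝ → ℝ := fun ξ => (ψ ξ).re with hu_def
  set v : ℝ → ℝ := fun ξ => (ψ ξ).im with hv_def
  have hud : Differentiable ℝ u := diff_comp_re ψ hψ1
  have hvd : Differentiable ℝ v := diff_comp_im ψ hψ1
  have hdu : deriv u = fun ξ => (deriv ψ ξ).re := deriv_comp_re ψ hψ1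
  have hdv : deriv v = fun ξ => (deriv ψ ξ).im := deriv_comp_im ψ hψ1
  have hud' : Differentiable ℝ (deriv u) := by rw [hdu]; exact diff_comp_re _ hψ2
  have hvd' : Differentiable ℝ (deriv v) := by rw [hdv]; exact diff_comp_im _ hψ2
  have hddu : ∀ ξ, deriv (deriv u) ξ = (deriv (deriv ψ) ξ).re := by
    intro ξ; rw [hdu]; exact congrFun (deriv_comp_re _ hψ2) ξ
  have hddv : ∀ ξ, deriv (deriv v) ξ = (deriv (deriv ψ) ξ).im := by
    intro ξ; rw [hdv]; exact congrFun (deriv_comp_im _ hψ2) ξ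
  -- the potential
  set q : ℝ → ℝ := fun ξ => ξ ^ 2 + lam * (u ξ ^ 2 + v ξ ^ 2)
      - V₀ * Real.cos (α * ξ) ^ 2 - μ with hq_def
  have hqc : Continuous q := by
    apply Continuous.sub
    apply Continuous.sub
    · exact (continuous_pow 2).add (continuous_const.mul
        (((hud.continuous.pow 2).add (hvd.continuous.pow 2))))
    · exact continuous_const.mul ((Real.continuous_cos.comp
        (continuous_const.mul continuous_id)).pow 2)
    · exact continuous_const
  -- real and imaginary parts of the equation
  have hnorm : ∀ ξ, ‖ψ ξ‖ ^ 2 = u ξ ^ 2 + v ξ ^ 2 := fun ξ => norm_sq_c (ψ ξ)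
  have hre : ∀ ξ, deriv (deriv u) ξ = q ξ * u ξ := by
    intro ξ
    have h := hEq ξ
    have h1 := congrArg Complex.re h
    simp only [Complex.add_re, Complex.sub_re, Complex.neg_re, Complex.mul_re,
      Complex.ofReal_re, Complex.ofReal_im, Complex.mul_im] at h1
    rw [hnorm ξ] at h1
    rw [hddu ξ, hq_def]
    simp only [hu_def, hv_def] at h1 ⊢
    ring_nf
    ring_nf at h1
    linarith
  have him : ∀ ξ, deriv (deriv v) ξ = q ξ * v ξ := by
    intro ξ
    have h := hEq ξ
    have h1 := congrArg Complex.im h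
    simp only [Complex.add_im, Complex.sub_im, Complex.neg_im, Complex.mul_re,
      Complex.ofReal_re, Complex.ofReal_im, Complex.mul_im] at h1
    rw [hnorm ξ] at h1
    rw [hddv ξ, hq_def]
    simp only [hu_def, hv_def] at h1 ⊢
    ring_nf
    ring_nf at h1
    linarith
  -- Wronskian
  set W : ℝ → ℝ := fun ξ => u ξ * deriv v ξ - deriv u ξ * v ξ with hW_def
  have hWd : ∀ ξ, HasDerivAt W 0 ξ := by
    intro ξ
    have h1 : HasDerivAt (fun ξ => u ξ * deriv v ξ)
        (deriv u ξ * deriv v ξ + u ξ * deriv (deriv v) ξ) ξ :=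
      (hud ξ).hasDerivAt.mul (hvd' ξ).hasDerivAt
    have h2 : HasDerivAt (fun ξ => deriv u ξ * v ξ)
        (deriv (deriv u) ξ * v ξ + deriv u ξ * deriv v ξ) ξ :=
      (hud' ξ).hasDerivAt.mul (hvd ξ).hasDerivAt
    have h3 := h1.fun_sub h2
    exact h3.congr_deriv (by rw [hre ξ, him ξ]; ring)
  have hWconst : ∀ ξ, W ξ = W 0 :=
    fun ξ => is_const_of_deriv_eq_zero (fun x => (hWd x).differentiableAt)
      (fun x => (hWd x).deriv) ξ 0
  have hdnorm : ∀ ξ, ‖deriv ψ ξ‖ ^ 2 = deriv u ξ ^ 2 + deriv v ξ ^ 2 := by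
    intro ξ; rw [hdu, hdv]; exact norm_sq_c (deriv ψ ξ)
  have hW0 : W 0 = 0 := by
    by_contra hc
    have hF : Integrable (fun ξ : ℝ => ‖ψ ξ‖ ^ 2 + ‖deriv ψ ξ‖ ^ 2) := hI1.add hI2
    have hbound : ∀ ξ : ℝ, ‖(2 * |W 0| : ℝ)‖ ≤ ‖ψ ξ‖ ^ 2 + ‖deriv ψ ξ‖ ^ 2 := by
      intro ξ
      rw [Real.norm_eq_abs, abs_of_nonneg (by positivity), hnorm ξ, hdnorm ξ]
      have hWx : |W 0| = |u ξ * deriv v ξ - deriv u ξ * v ξ| := by rw [← hWconst ξ]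
      rw [hWx]
      have h2 : |u ξ * deriv v ξ - deriv u ξ * v ξ|
          ≤ (u ξ ^ 2 + v ξ ^ 2 + deriv u ξ ^ 2 + deriv v ξ ^ 2) / 2 := by
        rw [abs_le]
        constructor <;> nlinarith [sq_nonneg (u ξ - deriv v ξ), sq_nonneg (u ξ + deriv v ξ),
          sq_nonneg (deriv u ξ - v ξ), sq_nonneg (deriv u ξ + v ξ)]
      linarith [h2]
    have hconst : Integrable (fun _ : ℝ => (2 * |W 0| : ℝ)) :=
      hF.mono' aestronglyMeasurable_const (Filter.Eventually.of_forall hbound)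
    rw [integrable_const_iff] at hconst
    rcases hconst with h | h
    · exact hc (by simpa [abs_eq_zero] using h)
    · have := h.measure_univ_lt_top; simp [Real.volume_univ] at this
  have hWzero : ∀ ξ, u ξ * deriv v ξ - deriv u ξ * v ξ = 0 := by
    intro ξ; have := hWconst ξ; rw [hW0] at this; exact this
  by_cases hv0 : ∀ ξ, v ξ = 0
  · -- ψ is already real
    refine ⟨u, 0, ⟨hud, hud', ?_, ?_, ?_⟩, ?_⟩
    · have : (fun ξ => u ξ ^ 2) = fun ξ => ‖ψ ξ‖ ^ 2 := by
        funext ξ; rw [hnorm ξ, hv0 ξ]; ring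
      rw [this]; exact hI1
    · have hvz : v = fun _ => 0 := funext hv0
      have hdvz : ∀ ξ, deriv v ξ = 0 := by intro ξ; rw [hvz]; simp
      have : (fun ξ => deriv u ξ ^ 2) = fun ξ => ‖deriv ψ ξ‖ ^ 2 := by
        funext ξ; rw [hdnorm ξ, hdvz ξ]; ring
      rw [this]; exact hI2
    · intro ξ
      rw [hre ξ]
      simp only [hq_def, hv0 ξ]
      ring
    · intro ξ
      have : ψ ξ = (u ξ : ℂ) := by
        apply Complex.ext
        · simp [hu_def]
        · simp only [Complex.ofReal_im]; exact hv0 ξ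
      rw [this]
      simp
  · push_neg at hv0
    obtain ⟨x₀, hvx0⟩ := hv0
    set c : ℝ := u x₀ / v x₀ with hc_def
    set g : ℝ → ℝ := fun ξ => u ξ - c * v ξ with hg_def
    have hgD : ∀ ξ, HasDerivAt g (deriv u ξ - c * deriv v ξ) ξ := fun ξ =>
      (hud ξ).hasDerivAt.sub (((hvd ξ).hasDerivAt).const_mul c)
    have hgd : Differentiable ℝ g := fun ξ => (hgD ξ).differentiableAt
    have hdg : deriv g = fun ξ => deriv u ξ - c * deriv v ξ :=
      funext fun ξ => (hgD ξ).deriv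
    have hgD' : ∀ ξ, HasDerivAt (deriv g) (deriv (deriv u) ξ - c * deriv (deriv v) ξ) ξ := by
      intro ξ
      rw [hdg]
      exact (hud' ξ).hasDerivAt.sub (((hvd' ξ).hasDerivAt).const_mul c)
    have hgd' : Differentiable ℝ (deriv g) := fun ξ => (hgD' ξ).differentiableAt
    have hddg : ∀ ξ, deriv (deriv g) ξ = q ξ * g ξ := by
      intro ξ
      rw [(hgD' ξ).deriv, hre ξ, him ξ, hg_def]
      ring
    have hg0 : g x₀ = 0 := by
      rw [hg_def]; simp only [hc_def]; field_simp; ring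
    have hg0' : deriv g x₀ = 0 := by
      rw [hdg]
      simp only [hc_def]
      have := hWzero x₀
      field_simp
      nlinarith [hWzero x₀]
    have hgz : ∀ ξ, g ξ = 0 := ode_zero q g hqc hgd hgd' hddg x₀ hg0 hg0'
    have huv : ∀ ξ, u ξ = c * v ξ := by
      intro ξ
      have h2 : u ξ - c * v ξ = 0 := hgz ξ
      linarith
    have hu'v' : ∀ ξ, deriv u ξ = c * deriv v ξ := by
      intro ξ
      have hgfun : g = fun _ => 0 := funext hgz
      have : deriv g ξ = 0 := by rw [hgfun]; simp
      rw [hdg] at this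
      have h2 : deriv u ξ - c * deriv v ξ = 0 := this
      linarith
    set z : ℂ := (c : ℂ) + Complex.I with hz_def
    set r : ℝ := ‖z‖ with hr_def
    set θ : ℝ := Complex.arg z with hθ_def
    have hz : (r : ℂ) * Complex.exp (θ * Complex.I) = z := Complex.norm_mul_exp_arg_mul_I z
    have hr2 : r ^ 2 = c ^ 2 + 1 := by
      rw [hr_def, Complex.sq_norm, Complex.normSq_apply, hz_def]
      simp
      ring
    have hψuv : ∀ ξ, ψ ξ = z * (v ξ : ℂ) := by
      intro ξ
      apply Complex.ext
      · simp only [hz_def, Complex.add_re, Complex.ofReal_re, Complex.I_re, Complex.mul_re,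
          Complex.add_im, Complex.I_im, Complex.ofReal_im]
        simpa using huv ξ
      · simp [hz_def]; rfl
    refine ⟨fun ξ => r * v ξ, θ, ⟨hvd.const_mul r, ?_, ?_, ?_, ?_⟩, ?_⟩
    case _ =>
      have hdU : deriv (fun ξ => r * v ξ) = fun ξ => r * deriv v ξ :=
        funext fun ξ => (((hvd ξ).hasDerivAt).const_mul r).deriv
      rw [hdU]
      exact hvd'.const_mul r
    case _ =>
      have : (fun ξ => (r * v ξ) ^ 2) = fun ξ => ‖ψ ξ‖ ^ 2 := by
        funext ξ
        rw [hnorm ξ, huv ξ]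
        linear_combination (v ξ) ^ 2 * hr2
      rw [this]; exact hI1
    case _ =>
      have hdU : deriv (fun ξ => r * v ξ) = fun ξ => r * deriv v ξ :=
        funext fun ξ => (((hvd ξ).hasDerivAt).const_mul r).deriv
      rw [hdU]
      have : (fun ξ => (r * deriv v ξ) ^ 2) = fun ξ => ‖deriv ψ ξ‖ ^ 2 := by
        funext ξ
        rw [hdnorm ξ, hu'v' ξ]
        linear_combination (deriv v ξ) ^ 2 * hr2
      rw [this]; exact hI2
    case _ =>
      intro ξ
      have hdU : deriv (fun ξ => r * v ξ) = fun ξ => r * deriv v ξ :=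
        funext fun ξ => (((hvd ξ).hasDerivAt).const_mul r).deriv
      have hddU : deriv (deriv (fun ξ => r * v ξ)) ξ = r * deriv (deriv v) ξ := by
        rw [hdU]
        exact (((hvd' ξ).hasDerivAt).const_mul r).deriv
      rw [hddU, him ξ]
      simp only [hq_def, huv ξ]
      linear_combination lam * r * v ξ ^ 3 * hr2
    case _ =>
      intro ξ
      rw [hψuv ξ, ← hz]
      push_cast
      rw [mul_comm Complex.I (θ : ℂ)]
      ring
end

section
/- If ψ ∈ G is a ground state with Lagrange multiplier μ(ψ) (so that −ψ'' + ξ²ψ + λ|ψ|²ψ − V₀cos²(αξ)ψ = μ(ψ)ψ), then μ(ψ) = E_min + (λ/2)∫_ℝ |ψ(ξ)|⁴ dξ, and consequently the set {μ(ψ) : ψ ∈ G} is bounded in ℝ. -/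
set_option maxHeartbeats 1000000

open MeasureTheory Real

/-- Membership in the unit-charge constraint manifold `Σ₁`. -/
def InSigma1 (ψ : ℝ → ℂ) : Prop := InX ψ ∧ (∫ ξ : ℝ, ‖ψ ξ‖ ^ 2) = 1

/-- `ψ` is a ground state (a minimizer of the energy over `Σ₁`). -/
def IsGroundState (lam V₀ α : ℝ) (ψ : ℝ → ℂ) : Prop :=
  InSigma1 ψ ∧ ∀ φ : ℝ → ℂ, InSigma1 φ → energy lam V₀ α ψ ≤ energy lam V₀ α φ

/-- `ψ` satisfies the Euler–Lagrange equation with Lagrange multiplier `μ`. -/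
def IsEulerLagrange (μ lam V₀ α : ℝ) (ψ : ℝ → ℂ) : Prop :=
  Differentiable ℝ (deriv ψ) ∧
  ∀ ξ : ℝ, -deriv (deriv ψ) ξ + (ξ ^ 2 : ℝ) * ψ ξ + (lam : ℂ) * (‖ψ ξ‖ ^ 2 : ℝ) * ψ ξ
      - (V₀ : ℂ) * (Real.cos (α * ξ) ^ 2 : ℝ) * ψ ξ = (μ : ℂ) * ψ ξ

open Filter Topology Set

section Aux

lemma re_mul_star (z : ℂ) : (z * star z).re = ‖z‖^2 := by
  rw [show star z = (starRingEnd ℂ) z from rfl, Complex.mul_conj, Complex.ofReal_re,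
    Complex.normSq_eq_norm_sq]

lemma mul_star_self (z : ℂ) : z * star z = ((‖z‖^2 : ℝ) : ℂ) := by
  rw [show star z = (starRingEnd ℂ) z from rfl, Complex.mul_conj,
    Complex.normSq_eq_norm_sq]

lemma lim_eq_zero_atTop {f : ℝ → ℝ} (hf : Integrable f) {L : ℝ}
    (h : Tendsto f atTop (𝓝 L)) : L = 0 := by
  by_contra hL
  have hε : 0 < |L| / 2 := by positivity
  have h1 : ∀ᶠ x in atTop, |L| / 2 ≤ ‖f x‖ := by
    have h2 : ∀ᶠ y in 𝓝 ‖L‖, |L| / 2 < y :=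
      eventually_gt_nhds (by rw [Real.norm_eq_abs]; linarith)
    filter_upwards [h.norm.eventually h2] with x hx using hx.le
  obtain ⟨N, hN⟩ := h1.exists_forall_of_atTop
  have hsub : Ici N ⊆ {x | |L| / 2 ≤ ‖f x‖} := fun x hx => hN x hx
  have := (measure_mono hsub).trans_lt (hf.measure_norm_ge_lt_top hε)
  rw [Real.volume_Ici] at this
  exact (lt_irrefl _ this).elim

lemma lim_eq_zero_atBot {f : ℝ → ℝ} (hf : Integrable f) {L : ℝ}
    (h : Tendsto f atBot (𝓝 L)) : L = 0 := by
  by_contra hL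
  have hε : 0 < |L| / 2 := by positivity
  have h1 : ∀ᶠ x in atBot, |L| / 2 ≤ ‖f x‖ := by
    have h2 : ∀ᶠ y in 𝓝 ‖L‖, |L| / 2 < y :=
      eventually_gt_nhds (by rw [Real.norm_eq_abs]; linarith)
    filter_upwards [h.norm.eventually h2] with x hx using hx.le
  obtain ⟨N, hN⟩ := h1.exists_forall_of_atBot
  have hsub : Iic N ⊆ {x | |L| / 2 ≤ ‖f x‖} := fun x hx => hN x hx
  have := (measure_mono hsub).trans_lt (hf.measure_norm_ge_lt_top hε)
  rw [Real.volume_Iic] at this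
  exact (lt_irrefl _ this).elim

lemma tendsto_zero_of_int {f : ℝ → ℝ} (hd : Differentiable ℝ f) (hf : Integrable f)
    (hf' : Integrable (deriv f)) :
    Tendsto f atBot (𝓝 0) ∧ Tendsto f atTop (𝓝 0) := by
  have hT : Tendsto f atTop (𝓝 (limUnder atTop f)) :=
    tendsto_limUnder_of_hasDerivAt_of_integrableOn_Ioi (a := 0)
      (fun x _ => (hd x).hasDerivAt) hf'.integrableOn
  have hB : Tendsto f atBot (𝓝 (limUnder atBot f)) :=
    tendsto_limUnder_of_hasDerivAt_of_integrableOn_Iic (a := 0)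
      (fun x _ => (hd x).hasDerivAt) hf'.integrableOn
  rw [lim_eq_zero_atTop hf hT] at hT
  rw [lim_eq_zero_atBot hf hB] at hB
  exact ⟨hB, hT⟩

lemma setIntegral_Iic_deriv {f : ℝ → ℝ} (hd : Differentiable ℝ f) (hf : Integrable f)
    (hf' : Integrable (deriv f)) (a : ℝ) : ∫ x in Iic a, deriv f x = f a := by
  have h := (tendsto_zero_of_int hd hf hf').1
  have := integral_Iic_of_hasDerivAt_of_tendsto' (a := a)
    (fun x _ => (hd x).hasDerivAt) hf'.integrableOn h
  simpa using this

lemma integral_deriv_zero {f : ℝ → ℝ} (hd : Differentiable ℝ f) (hf : Integrable f)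
    (hf' : Integrable (deriv f)) : ∫ x, deriv f x = 0 := by
  obtain ⟨hB, hT⟩ := tendsto_zero_of_int hd hf hf'
  have h1 : ∫ x in Iic 0, deriv f x = f 0 := setIntegral_Iic_deriv hd hf hf' 0
  have h2 : ∫ x in Ioi 0, deriv f x = 0 - f 0 :=
    integral_Ioi_of_hasDerivAt_of_tendsto' (fun x _ => (hd x).hasDerivAt)
      hf'.integrableOn hT
  have h3 := intervalIntegral.integral_Iic_add_Ioi (f := deriv f) (μ := volume) (b := 0)
    hf'.integrableOn hf'.integrableOn
  rw [h1, h2] at h3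
  linarith

lemma mu_formula (lam V₀ α : ℝ) (ψ : ℝ → ℂ) (μ : ℝ)
    (hSig : InSigma1 ψ) (hEL : IsEulerLagrange μ lam V₀ α ψ) :
    μ = energy lam V₀ α ψ + lam / 2 * (∫ ξ : ℝ, ‖ψ ξ‖ ^ 4) := by
  obtain ⟨⟨hd, hI2, hK, hP, hI4⟩, hnorm⟩ := hSig
  obtain ⟨hd', hel⟩ := hEL
  set a : ℝ → ℝ := fun ξ => ξ^2 + lam*‖ψ ξ‖^2 - V₀*(Real.cos (α*ξ))^2 - μ with ha
  have hdd : ∀ ξ, deriv (deriv ψ) ξ = ((a ξ : ℝ) : ℂ) * ψ ξ := by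
    intro ξ
    have h := hel ξ
    simp only [ha]
    push_cast at h ⊢
    linear_combination -h
  -- derivative of G := re (ψ' ⬝ star ψ)
  have hG : ∀ ξ, HasDerivAt (fun t => (deriv ψ t * star (ψ t)).re)
      (a ξ * ‖ψ ξ‖^2 + ‖deriv ψ ξ‖^2) ξ := by
    intro ξ
    have h1 : HasDerivAt (fun t => deriv ψ t * star (ψ t))
        (deriv (deriv ψ) ξ * star (ψ ξ) + deriv ψ ξ * star (deriv ψ ξ)) ξ :=
      ((hd' ξ).hasDerivAt).mul ((hd ξ).hasDerivAt.star)
    have h2 := Complex.reCLM.hasFDerivAt.comp_hasDerivAt ξ h1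
    have h3 : (deriv (deriv ψ) ξ * star (ψ ξ) + deriv ψ ξ * star (deriv ψ ξ)).re
        = a ξ * ‖ψ ξ‖^2 + ‖deriv ψ ξ‖^2 := by
      rw [Complex.add_re, re_mul_star, hdd ξ, mul_assoc, mul_star_self, ← Complex.ofReal_mul,
        Complex.ofReal_re]
    simp only [Function.comp_def, Complex.reCLM_apply] at h2
    rw [h3] at h2
    exact h2
  have hdiffG : Differentiable ℝ (fun t => (deriv ψ t * star (ψ t)).re) :=
    fun ξ => (hG ξ).differentiableAt
  have hderivG : deriv (fun t => (deriv ψ t * star (ψ t)).re)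
      = fun ξ => a ξ * ‖ψ ξ‖^2 + ‖deriv ψ ξ‖^2 := funext fun ξ => (hG ξ).deriv
  -- integrability of G
  have hcontG : Continuous fun t => (deriv ψ t * star (ψ t)).re :=
    Complex.continuous_re.comp ((hd'.continuous).mul (continuous_star.comp hd.continuous))
  have hGint : Integrable (fun t => (deriv ψ t * star (ψ t)).re) := by
    have hb : Integrable (fun ξ => ‖ψ ξ‖^2 + ‖deriv ψ ξ‖^2) := hI2.add hK
    refine hb.mono' hcontG.aestronglyMeasurable ?_
    refine Eventually.of_forall fun ξ => ?_
    have h1 : |(deriv ψ ξ * star (ψ ξ)).re| ≤ ‖deriv ψ ξ‖ * ‖ψ ξ‖ := by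
      calc |(deriv ψ ξ * star (ψ ξ)).re| ≤ ‖deriv ψ ξ * star (ψ ξ)‖ := Complex.abs_re_le_norm _
      _ = ‖deriv ψ ξ‖ * ‖ψ ξ‖ := by rw [norm_mul, norm_star]
    rw [Real.norm_eq_abs]
    nlinarith [sq_nonneg (‖deriv ψ ξ‖ - ‖ψ ξ‖), sq_nonneg (‖ψ ξ‖), sq_nonneg (‖deriv ψ ξ‖)]
  -- integrability of the pieces of deriv G
  have hcos : Integrable (fun ξ => (Real.cos (α*ξ))^2 * ‖ψ ξ‖^2) := by
    refine hI2.mono' ?_ (Eventually.of_forall fun ξ => ?_)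
    · exact (((Real.continuous_cos.comp (continuous_const.mul continuous_id)).pow 2).mul
        ((hd.continuous.norm).pow 2)).aestronglyMeasurable
    · have h1 : (Real.cos (α*ξ))^2 ≤ 1 := Real.cos_sq_le_one _
      have h2 : (0:ℝ) ≤ ‖ψ ξ‖^2 := by positivity
      have h3 : (0:ℝ) ≤ (Real.cos (α*ξ))^2 := sq_nonneg _
      rw [Real.norm_eq_abs, abs_of_nonneg (mul_nonneg h3 h2)]
      nlinarith
  have hReq : (fun ξ => a ξ * ‖ψ ξ‖^2 + ‖deriv ψ ξ‖^2)
      = fun ξ => (ξ^2*‖ψ ξ‖^2 + lam*‖ψ ξ‖^4 + ‖deriv ψ ξ‖^2)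
        - (V₀*((Real.cos (α*ξ))^2*‖ψ ξ‖^2) + μ*‖ψ ξ‖^2) := by
    funext ξ
    simp only [ha]
    ring
  have hI4lam : Integrable (fun ξ => lam*‖ψ ξ‖^4) := hI4.const_mul lam
  have hcosV : Integrable (fun ξ => V₀*((Real.cos (α*ξ))^2*‖ψ ξ‖^2)) := hcos.const_mul V₀
  have hI2mu : Integrable (fun ξ => μ*‖ψ ξ‖^2) := hI2.const_mul μ
  have hint1a : Integrable (fun ξ => ξ^2*‖ψ ξ‖^2 + lam*‖ψ ξ‖^4) := hP.add hI4lam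
  have hint1 : Integrable (fun ξ => ξ^2*‖ψ ξ‖^2 + lam*‖ψ ξ‖^4 + ‖deriv ψ ξ‖^2) :=
    hint1a.add hK
  have hint2 : Integrable (fun ξ => V₀*((Real.cos (α*ξ))^2*‖ψ ξ‖^2) + μ*‖ψ ξ‖^2) :=
    hcosV.add hI2mu
  have hzero : ∫ ξ, (a ξ * ‖ψ ξ‖^2 + ‖deriv ψ ξ‖^2) = 0 := by
    rw [← hderivG]
    exact integral_deriv_zero hdiffG hGint (by rw [hderivG, hReq]; exact hint1.sub hint2)
  have hsplit : ∫ ξ, (a ξ * ‖ψ ξ‖^2 + ‖deriv ψ ξ‖^2)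
      = ((∫ ξ : ℝ, ξ^2*‖ψ ξ‖^2) + lam*(∫ ξ : ℝ, ‖ψ ξ‖^4) + (∫ ξ : ℝ, ‖deriv ψ ξ‖^2))
        - (V₀*(∫ ξ : ℝ, (Real.cos (α*ξ))^2*‖ψ ξ‖^2) + μ*(∫ ξ : ℝ, ‖ψ ξ‖^2)) := by
    rw [hReq, integral_sub hint1 hint2,
      integral_add hint1a hK,
      integral_add hP hI4lam,
      integral_add hcosV hI2mu,
      integral_const_mul, integral_const_mul, integral_const_mul]
  rw [hzero, hnorm] at hsplit
  simp only [energy]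
  linarith
end Aux

theorem lagrange_multiplier_formula_and_bounded (lam V₀ α : ℝ) :
    (∀ (ψ : ℝ → ℂ) (μ : ℝ), IsGroundState lam V₀ α ψ → IsEulerLagrange μ lam V₀ α ψ →
      μ = energy lam V₀ α ψ + lam / 2 * (∫ ξ : ℝ, ‖ψ ξ‖ ^ 4)) ∧
    (∃ M : ℝ, ∀ (ψ : ℝ → ℂ) (μ : ℝ), IsGroundState lam V₀ α ψ →
      IsEulerLagrange μ lam V₀ α ψ → |μ| ≤ M) := by
  constructor
  · intro ψ μ hgs hEL
    exact mu_formula lam V₀ α ψ μ hgs.1 hEL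
  · obtain ⟨e, he⟩ : ∃ e : ℝ, e = sInf (energy lam V₀ α '' {φ | InSigma1 φ}) := ⟨_, rfl⟩
    obtain ⟨ε, hεdef⟩ : ∃ ε : ℝ, ε = |lam| + 1 := ⟨_, rfl⟩
    refine ⟨|e| + |lam|/2 * (ε + (2*e + 2*|V₀| + ε^2)), ?_⟩
    intro ψ μ hgs hEL
    obtain ⟨hSig, hmin⟩ := hgs
    obtain ⟨⟨hd, hI2, hK, hP, hI4⟩, hnorm⟩ := id hSig
    have hd' := hEL.1
    have hεpos : (0:ℝ) < ε := by rw [hεdef]; positivity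
    have hε1 : (1:ℝ) ≤ ε := by rw [hεdef]; nlinarith [abs_nonneg lam]
    -- the energy of a ground state equals the infimum
    have hE : energy lam V₀ α ψ = e := by
      have hmem : energy lam V₀ α ψ ∈ energy lam V₀ α '' {φ | InSigma1 φ} := ⟨ψ, hSig, rfl⟩
      have hlb : energy lam V₀ α ψ ∈ lowerBounds (energy lam V₀ α '' {φ | InSigma1 φ}) := by
        rintro y ⟨φ, hφ, rfl⟩
        exact hmin φ hφ
      rw [he]
      exact (IsLeast.csInf_eq ⟨hmem, hlb⟩).symm
    have hform := mu_formula lam V₀ α ψ μ hSig hEL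
    rw [hE] at hform
    -- derivative of ξ ↦ ‖ψ ξ‖²
    have hg : ∀ ξ, HasDerivAt (fun t => ‖ψ t‖^2) (2 * (deriv ψ ξ * star (ψ ξ)).re) ξ := by
      intro ξ
      have h1 : HasDerivAt (fun t => ψ t * star (ψ t))
          (deriv ψ ξ * star (ψ ξ) + ψ ξ * star (deriv ψ ξ)) ξ :=
        (hd ξ).hasDerivAt.mul ((hd ξ).hasDerivAt.star)
      have h2 := Complex.reCLM.hasFDerivAt.comp_hasDerivAt ξ h1
      simp only [Function.comp_def, Complex.reCLM_apply] at h2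
      have h3 : (deriv ψ ξ * star (ψ ξ) + ψ ξ * star (deriv ψ ξ)).re
          = 2 * (deriv ψ ξ * star (ψ ξ)).re := by
        have h4 : ψ ξ * star (deriv ψ ξ) = star (deriv ψ ξ * star (ψ ξ)) := by
          rw [star_mul, star_star]
        rw [Complex.add_re, h4, show star (deriv ψ ξ * star (ψ ξ))
          = (starRingEnd ℂ) (deriv ψ ξ * star (ψ ξ)) from rfl, Complex.conj_re]
        ring
      rw [h3] at h2
      have hgfun : (fun t : ℝ => ‖ψ t‖^2) = fun t => (ψ t * star (ψ t)).re :=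
        funext fun t => (re_mul_star _).symm
      rw [hgfun]
      exact h2
    have hdiffg : Differentiable ℝ (fun t : ℝ => ‖ψ t‖^2) := fun ξ => (hg ξ).differentiableAt
    have hderivg : deriv (fun t : ℝ => ‖ψ t‖^2) = fun ξ => 2 * (deriv ψ ξ * star (ψ ξ)).re :=
      funext fun ξ => (hg ξ).deriv
    -- integrability of the derivative
    have hcontG : Continuous fun t => (deriv ψ t * star (ψ t)).re :=
      Complex.continuous_re.comp ((hd'.continuous).mul (continuous_star.comp hd.continuous))
    have hGabs : ∀ ξ, |(deriv ψ ξ * star (ψ ξ)).re| ≤ ‖deriv ψ ξ‖ * ‖ψ ξ‖ := by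
      intro ξ
      calc |(deriv ψ ξ * star (ψ ξ)).re| ≤ ‖deriv ψ ξ * star (ψ ξ)‖ := Complex.abs_re_le_norm _
      _ = ‖deriv ψ ξ‖ * ‖ψ ξ‖ := by rw [norm_mul, norm_star]
    have hGint : Integrable (fun t => 2 * (deriv ψ t * star (ψ t)).re) := by
      have hb : Integrable (fun ξ => ‖ψ ξ‖^2 + ‖deriv ψ ξ‖^2) := hI2.add hK
      refine hb.mono' (continuous_const.mul hcontG).aestronglyMeasurable ?_
      refine Eventually.of_forall fun ξ => ?_
      rw [Real.norm_eq_abs, abs_mul, abs_two]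
      nlinarith [hGabs ξ, sq_nonneg (‖deriv ψ ξ‖ - ‖ψ ξ‖), sq_nonneg (‖ψ ξ‖),
        sq_nonneg (‖deriv ψ ξ‖)]
    -- pointwise AM-GM bound on the derivative
    have hptb : ∀ ξ : ℝ, 2 * (deriv ψ ξ * star (ψ ξ)).re
        ≤ ε * ‖ψ ξ‖^2 + (1/ε) * ‖deriv ψ ξ‖^2 := by
      intro ξ
      have h1 := hGabs ξ
      have h2 : 2 * (‖deriv ψ ξ‖ * ‖ψ ξ‖) ≤ ε * ‖ψ ξ‖^2 + (1/ε) * ‖deriv ψ ξ‖^2 := by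
        have hid : ε * ‖ψ ξ‖^2 + (1/ε) * ‖deriv ψ ξ‖^2 - 2 * (‖deriv ψ ξ‖ * ‖ψ ξ‖)
            = (1/ε) * (ε * ‖ψ ξ‖ - ‖deriv ψ ξ‖)^2 := by
          field_simp
          ring
        linarith [mul_nonneg (one_div_pos.mpr hεpos).le
          (sq_nonneg (ε * ‖ψ ξ‖ - ‖deriv ψ ξ‖)), hid]
      nlinarith [abs_le.mp h1]
    have hbint : Integrable (fun ξ => ε * ‖ψ ξ‖^2 + (1/ε) * ‖deriv ψ ξ‖^2) :=
      (hI2.const_mul ε).add (hK.const_mul (1/ε))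
    -- the sup bound : ∀ x, ‖ψ x‖² ≤ ε + (1/ε) K
    have hKnn : (0:ℝ) ≤ ∫ ξ : ℝ, ‖deriv ψ ξ‖^2 := integral_nonneg fun ξ => by positivity
    have hdint : Integrable (deriv (fun t : ℝ => ‖ψ t‖^2)) := by
      rw [hderivg]; exact hGint
    have hpt : ∀ x : ℝ, ‖ψ x‖^2 ≤ ε + (1/ε) * ∫ ξ : ℝ, ‖deriv ψ ξ‖^2 := by
      intro x
      have h1 : ∫ ξ in Iic x, 2 * (deriv ψ ξ * star (ψ ξ)).re = ‖ψ x‖^2 := by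
        have := setIntegral_Iic_deriv hdiffg hI2 hdint x
        rwa [hderivg] at this
      have h2 : ∫ ξ in Iic x, 2 * (deriv ψ ξ * star (ψ ξ)).re
          ≤ ∫ ξ in Iic x, (ε * ‖ψ ξ‖^2 + (1/ε) * ‖deriv ψ ξ‖^2) :=
        setIntegral_mono hGint.integrableOn hbint.integrableOn hptb
      have h3 : ∫ ξ in Iic x, (ε * ‖ψ ξ‖^2 + (1/ε) * ‖deriv ψ ξ‖^2)
          ≤ ∫ ξ : ℝ, (ε * ‖ψ ξ‖^2 + (1/ε) * ‖deriv ψ ξ‖^2) := by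
        refine setIntegral_le_integral hbint (Eventually.of_forall fun ξ => ?_)
        have h0 : (0:ℝ) < 1/ε := by positivity
        positivity
      have h4 : ∫ ξ : ℝ, (ε * ‖ψ ξ‖^2 + (1/ε) * ‖deriv ψ ξ‖^2)
          = ε + (1/ε) * ∫ ξ : ℝ, ‖deriv ψ ξ‖^2 := by
        rw [integral_add (hI2.const_mul ε) (hK.const_mul (1/ε)), integral_const_mul,
          integral_const_mul, hnorm, mul_one]
      linarith
    -- bounds on the quartic term
    have hQnn : (0:ℝ) ≤ ∫ ξ : ℝ, ‖ψ ξ‖^4 := integral_nonneg fun ξ => by positivity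
    have hPnn : (0:ℝ) ≤ ∫ ξ : ℝ, ξ^2 * ‖ψ ξ‖^2 := integral_nonneg fun ξ => by positivity
    have hQle : ∫ ξ : ℝ, ‖ψ ξ‖^4 ≤ (ε + (1/ε) * ∫ ξ : ℝ, ‖deriv ψ ξ‖^2) * 1 := by
      have h1 : ∫ ξ : ℝ, ‖ψ ξ‖^4
          ≤ ∫ ξ : ℝ, (ε + (1/ε) * ∫ ζ : ℝ, ‖deriv ψ ζ‖^2) * ‖ψ ξ‖^2 := by
        refine integral_mono hI4 (hI2.const_mul _) fun ξ => ?_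
        have h2 := hpt ξ
        nlinarith [sq_nonneg (‖ψ ξ‖), norm_nonneg (ψ ξ)]
      rwa [integral_const_mul, hnorm] at h1
    have hQε : ε * (∫ ξ : ℝ, ‖ψ ξ‖^4) ≤ ε^2 + ∫ ξ : ℝ, ‖deriv ψ ξ‖^2 := by
      have h := mul_le_mul_of_nonneg_left hQle hεpos.le
      rw [mul_one] at h
      have h2 : ε * (ε + (1/ε) * ∫ ξ : ℝ, ‖deriv ψ ξ‖^2) = ε^2 + ∫ ξ : ℝ, ‖deriv ψ ξ‖^2 := by
        field_simp
      linarith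
    -- bounds on the cosine term
    have hcos : Integrable (fun ξ => (Real.cos (α*ξ))^2 * ‖ψ ξ‖^2) := by
      refine hI2.mono' ?_ (Eventually.of_forall fun ξ => ?_)
      · exact (((Real.continuous_cos.comp (continuous_const.mul continuous_id)).pow 2).mul
          ((hd.continuous.norm).pow 2)).aestronglyMeasurable
      · have h1 : (Real.cos (α*ξ))^2 ≤ 1 := Real.cos_sq_le_one _
        have h2 : (0:ℝ) ≤ ‖ψ ξ‖^2 := by positivity
        have h3 : (0:ℝ) ≤ (Real.cos (α*ξ))^2 := sq_nonneg _
        rw [Real.norm_eq_abs, abs_of_nonneg (mul_nonneg h3 h2)]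
        nlinarith
    have hCnn : (0:ℝ) ≤ ∫ ξ : ℝ, (Real.cos (α*ξ))^2 * ‖ψ ξ‖^2 :=
      integral_nonneg fun ξ => mul_nonneg (sq_nonneg _) (by positivity)
    have hC1 : ∫ ξ : ℝ, (Real.cos (α*ξ))^2 * ‖ψ ξ‖^2 ≤ 1 := by
      rw [← hnorm]
      refine integral_mono hcos hI2 fun ξ => ?_
      nlinarith [Real.cos_sq_le_one (α*ξ), sq_nonneg (Real.cos (α*ξ)), sq_nonneg (‖ψ ξ‖)]
    -- the energy identity
    have hEe : (∫ ξ : ℝ, ‖deriv ψ ξ‖^2) + (∫ ξ : ℝ, ξ^2*‖ψ ξ‖^2)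
        + lam/2 * (∫ ξ : ℝ, ‖ψ ξ‖^4)
        - V₀ * (∫ ξ : ℝ, (Real.cos (α*ξ))^2*‖ψ ξ‖^2) = e := by
      rw [← hE]
      simp only [energy]
    -- bound on the kinetic term
    have hKb : (∫ ξ : ℝ, ‖deriv ψ ξ‖^2) ≤ 2*e + 2*|V₀| + ε^2 := by
      have h_a : (0:ℝ) ≤ (lam + |lam|) * (∫ ξ : ℝ, ‖ψ ξ‖^4) :=
        mul_nonneg (by linarith [neg_abs_le lam]) hQnn
      have h_b : (0:ℝ) ≤ (|V₀| - V₀) * (∫ ξ : ℝ, (Real.cos (α*ξ))^2*‖ψ ξ‖^2) :=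
        mul_nonneg (by linarith [le_abs_self V₀]) hCnn
      have h_c : (0:ℝ) ≤ |V₀| * (1 - ∫ ξ : ℝ, (Real.cos (α*ξ))^2*‖ψ ξ‖^2) :=
        mul_nonneg (abs_nonneg V₀) (by linarith)
      have h_d : (0:ℝ) ≤ (ε - |lam|) * (∫ ξ : ℝ, ‖ψ ξ‖^4) :=
        mul_nonneg (by rw [hεdef]; linarith) hQnn
      nlinarith [hQε, hPnn, hQnn]
    have hK0nn : (0:ℝ) ≤ 2*e + 2*|V₀| + ε^2 :=
      le_trans hKnn hKb
    have hQb : ∫ ξ : ℝ, ‖ψ ξ‖^4 ≤ ε + (2*e + 2*|V₀| + ε^2) := by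
      nlinarith [hQε, mul_nonneg (show (0:ℝ) ≤ ε - 1 by linarith) hK0nn, hεpos, hQnn, hKb]
    -- conclusion
    have habs : |μ| ≤ |e| + |lam|/2 * ∫ ξ : ℝ, ‖ψ ξ‖^4 := by
      rw [hform]
      refine (abs_add_le _ _).trans ?_
      have h1 : |lam/2 * ∫ ξ : ℝ, ‖ψ ξ‖^4| = |lam|/2 * ∫ ξ : ℝ, ‖ψ ξ‖^4 := by
        rw [abs_mul, abs_div, abs_two, abs_of_nonneg hQnn]
      rw [h1]
    have hfin : |lam|/2 * (∫ ξ : ℝ, ‖ψ ξ‖^4) ≤ |lam|/2 * (ε + (2*e + 2*|V₀| + ε^2)) :=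
      mul_le_mul_of_nonneg_left hQb (by positivity)
    linarith
end

section
/- The function λ ↦ E_min(λ) = min{E_λ(ψ) : ψ ∈ Σ₁} is continuous and concave on ℝ, and satisfies E_min(λ) → +∞ as λ → +∞ and E_min(λ) → −∞ as λ → −∞. -/
open MeasureTheory Real Filter Topology

/-- The minimal energy `E_min(λ)`. -/
noncomputable def Emin (V₀ α : ℝ) (lam : ℝ) : ℝ :=
  sInf {e : ℝ | ∃ ψ : ℝ → ℂ, InSigma1 ψ ∧ energy lam V₀ α ψ = e}

noncomputable def gauss : ℝ → ℂ := fun ξ => ((π ^ (-(1:ℝ)/4) * Real.exp (-ξ^2/2) : ℝ) : ℂ)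

lemma gauss_norm (ξ : ℝ) : ‖gauss ξ‖ = π ^ (-(1:ℝ)/4) * Real.exp (-ξ^2/2) := by
  rw [gauss, Complex.norm_real, Real.norm_eq_abs, abs_of_pos]
  positivity

lemma gauss_hasDeriv (ξ : ℝ) :
    HasDerivAt gauss ((π ^ (-(1:ℝ)/4) * (Real.exp (-ξ^2/2) * (-ξ)) : ℝ) : ℂ) ξ := by
  have h1 : HasDerivAt (fun ξ : ℝ => -ξ^2/2) (-ξ) ξ := by
    have := (hasDerivAt_pow 2 ξ).neg.div_const 2
    refine this.congr_deriv ?_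
    · push_cast
      ring
  have h2 := (h1.exp.const_mul (π ^ (-(1:ℝ)/4))).ofReal_comp
  exact h2

lemma gauss_deriv : deriv gauss = fun ξ => ((π ^ (-(1:ℝ)/4) * (Real.exp (-ξ^2/2) * (-ξ)) : ℝ) : ℂ) :=
  funext fun ξ => (gauss_hasDeriv ξ).deriv

lemma gauss_deriv_norm (ξ : ℝ) : ‖deriv gauss ξ‖ = π ^ (-(1:ℝ)/4) * Real.exp (-ξ^2/2) * |ξ| := by
  rw [gauss_deriv, Complex.norm_real, Real.norm_eq_abs, abs_mul, abs_mul, abs_of_pos (by positivity),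
    abs_of_pos (Real.exp_pos _), abs_neg, mul_assoc]

lemma c2sq : (π ^ (-(1:ℝ)/4))^2 = π ^ (-(1:ℝ)/2) := by
  rw [← Real.rpow_natCast (π ^ (-(1:ℝ)/4)) 2, ← Real.rpow_mul pi_pos.le]
  norm_num

lemma gauss_norm_sq (ξ : ℝ) : ‖gauss ξ‖^2 = π ^ (-(1:ℝ)/2) * Real.exp (-1*ξ^2) := by
  rw [gauss_norm, mul_pow, c2sq, ← Real.exp_nat_mul]
  norm_num
  left; ring

lemma gauss_norm_four (ξ : ℝ) : ‖gauss ξ‖^4 = π ^ (-(1:ℝ)) * Real.exp (-2*ξ^2) := by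
  rw [gauss_norm, mul_pow, ← Real.exp_nat_mul, ← Real.rpow_natCast (π ^ (-(1:ℝ)/4)) 4,
    ← Real.rpow_mul pi_pos.le]
  norm_num
  left; ring

lemma gauss_deriv_norm_sq (ξ : ℝ) :
    ‖deriv gauss ξ‖^2 = π ^ (-(1:ℝ)/2) * (ξ^2 * Real.exp (-1*ξ^2)) := by
  rw [gauss_deriv_norm, mul_pow, mul_pow, c2sq, ← Real.exp_nat_mul, sq_abs]
  norm_num
  ring_nf

lemma integrable_sq_exp : Integrable (fun x : ℝ => x^2 * Real.exp (-1*x^2)) := by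
  have := integrable_rpow_mul_exp_neg_mul_sq (b := 1) one_pos (s := 2) (by norm_num)
  have h : ∀ x : ℝ, x ^ (2:ℝ) = x ^ 2 := fun x => by
    rw [show (2:ℝ) = ((2:ℕ):ℝ) by norm_num, Real.rpow_natCast]
  simpa [h] using this

lemma gauss_int_norm_sq : (∫ ξ : ℝ, ‖gauss ξ‖^2) = 1 := by
  simp_rw [gauss_norm_sq]
  rw [MeasureTheory.integral_const_mul, integral_gaussian, div_one, Real.sqrt_eq_rpow,
    ← Real.rpow_add pi_pos]
  norm_num

lemma gauss_differentiable : Differentiable ℝ gauss :=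
  fun ξ => (gauss_hasDeriv ξ).differentiableAt

lemma gauss_inX : InX gauss := by
  refine ⟨gauss_differentiable, ?_, ?_, ?_, ?_⟩
  · simp_rw [gauss_norm_sq]
    exact (integrable_exp_neg_mul_sq one_pos).const_mul _
  · simp_rw [gauss_deriv_norm_sq]
    exact integrable_sq_exp.const_mul _
  · simp_rw [gauss_norm_sq]
    have : ∀ ξ : ℝ, ξ^2 * (π ^ (-(1:ℝ)/2) * Real.exp (-1*ξ^2))
        = π ^ (-(1:ℝ)/2) * (ξ^2 * Real.exp (-1*ξ^2)) := fun ξ => by ring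
    simp_rw [this]
    exact integrable_sq_exp.const_mul _
  · simp_rw [gauss_norm_four]
    exact (integrable_exp_neg_mul_sq two_pos).const_mul _

lemma gauss_inSigma1 : InSigma1 gauss := ⟨gauss_inX, gauss_int_norm_sq⟩

lemma gauss_four_pos : 0 < ∫ ξ : ℝ, ‖gauss ξ‖^4 := by
  rw [integral_pos_iff_support_of_nonneg_ae]
  · have : Function.support (fun ξ : ℝ => ‖gauss ξ‖^4) = Set.univ := by
      ext ξ
      simp only [Function.mem_support, Set.mem_univ, iff_true]
      have : 0 < ‖gauss ξ‖ := by rw [gauss_norm]; positivity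
      positivity
    rw [this]
    simp [Real.volume_univ]
  · exact Filter.Eventually.of_forall fun ξ => by positivity
  · exact gauss_inX.2.2.2.2


lemma normsq_c (z : ℂ) : ‖z‖^2 = z.re^2 + z.im^2 := by
  rw [Complex.sq_norm, Complex.normSq_apply]; ring

variable {ψ : ℝ → ℂ}

/-- derivative of the squared modulus -/
lemma hasDerivAt_normsq (hd : Differentiable ℝ ψ) (ξ : ℝ) :
    HasDerivAt (fun t => ‖ψ t‖^2)
      (2*((ψ ξ).re * (deriv ψ ξ).re + (ψ ξ).im * (deriv ψ ξ).im)) ξ := by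
  have hre : HasDerivAt (fun t => (ψ t).re) ((deriv ψ ξ).re) ξ :=
    (Complex.reCLM.hasFDerivAt.comp_hasDerivAt ξ (hd ξ).hasDerivAt)
  have him : HasDerivAt (fun t => (ψ t).im) ((deriv ψ ξ).im) ξ :=
    (Complex.imCLM.hasFDerivAt.comp_hasDerivAt ξ (hd ξ).hasDerivAt)
  have h := ((hre.pow 2).add (him.pow 2))
  have heq : (fun t => ‖ψ t‖^2) = fun t => (ψ t).re^2 + (ψ t).im^2 :=
    funext fun t => normsq_c _
  rw [heq]
  refine h.congr_deriv ?_
  push_cast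
  ring

lemma amgm {e a b c d : ℝ} (he : 0 < e) :
    2*(a*b+c*d) ≤ e*(b^2+d^2) + (1/e)*(a^2+c^2) := by
  have expand : e*(b^2+d^2) + (1/e)*(a^2+c^2) - 2*(a*b+c*d)
      = ((e*b-a)^2+(e*d-c)^2)/e := by field_simp; ring
  have h : 0 ≤ ((e*b-a)^2+(e*d-c)^2)/e := by positivity
  linarith

lemma G_abs_le {ε : ℝ} (hε : 0 < ε) (ξ : ℝ) :
    |2*((ψ ξ).re * (deriv ψ ξ).re + (ψ ξ).im * (deriv ψ ξ).im)|
      ≤ ε * ‖deriv ψ ξ‖^2 + (1/ε) * ‖ψ ξ‖^2 := by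
  rw [normsq_c, normsq_c, abs_le]
  constructor
  · have := amgm (a := (ψ ξ).re) (b := -(deriv ψ ξ).re) (c := (ψ ξ).im)
      (d := -(deriv ψ ξ).im) hε
    rw [neg_le]
    nlinarith [this]
  · exact amgm hε

/-- shorthand for derivative of |ψ|² -/
noncomputable def Gf (ψ : ℝ → ℂ) : ℝ → ℝ :=
  fun ξ => 2*((ψ ξ).re * (deriv ψ ξ).re + (ψ ξ).im * (deriv ψ ξ).im)

lemma Gf_integrable (hd : Differentiable ℝ ψ)
    (h2 : Integrable (fun ξ : ℝ => ‖ψ ξ‖ ^ 2))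
    (hD : Integrable (fun ξ : ℝ => ‖deriv ψ ξ‖ ^ 2)) : Integrable (Gf ψ) := by
  have hm : AEStronglyMeasurable (Gf ψ) volume := by
    have hψm : Measurable ψ := hd.continuous.measurable
    have hdm : Measurable (deriv ψ) := measurable_deriv ψ
    exact (((hψm.re.mul hdm.re).add (hψm.im.mul hdm.im)).const_mul 2).aestronglyMeasurable
  refine (hD.add h2).mono' hm ?_
  filter_upwards with ξ
  rw [Real.norm_eq_abs]
  simpa [Gf] using G_abs_le one_pos ξ

lemma normsq_tendsto_zero (hd : Differentiable ℝ ψ)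
    (h2 : Integrable (fun ξ : ℝ => ‖ψ ξ‖ ^ 2))
    (hD : Integrable (fun ξ : ℝ => ‖deriv ψ ξ‖ ^ 2)) :
    Tendsto (fun t => ‖ψ t‖^2) atTop (𝓝 0) := by
  have hG := Gf_integrable hd h2 hD
  have hftc : ∀ y : ℝ, ∫ t in (0:ℝ)..y, Gf ψ t = ‖ψ y‖^2 - ‖ψ 0‖^2 := fun y =>
    intervalIntegral.integral_eq_sub_of_hasDerivAt
      (fun t _ => hasDerivAt_normsq hd t) (hG.intervalIntegrable)
  have hlim : Tendsto (fun y : ℝ => ∫ t in (0:ℝ)..y, Gf ψ t) atTop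
      (𝓝 (∫ t in Set.Ioi (0:ℝ), Gf ψ t)) :=
    intervalIntegral_tendsto_integral_Ioi 0 hG.integrableOn tendsto_id
  set L := (∫ t in Set.Ioi (0:ℝ), Gf ψ t) + ‖ψ 0‖^2 with hL
  have htend : Tendsto (fun y => ‖ψ y‖^2) atTop (𝓝 L) := by
    have := hlim.add_const (‖ψ 0‖^2)
    refine this.congr fun y => ?_
    rw [hftc y]; ring
  have hLnn : (0:ℝ) ≤ L := ge_of_tendsto' htend fun y => by positivity
  have hL0 : L = 0 := by
    by_contra hne
    have hLpos : 0 < L := hLnn.lt_of_ne' hne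
    have hev : ∀ᶠ y : ℝ in atTop, L/2 < ‖ψ y‖^2 :=
      htend.eventually (eventually_gt_nhds (half_lt_self hLpos))
    obtain ⟨A, hA⟩ := hev.exists_forall_of_atTop
    have hconst : IntegrableOn (fun _ : ℝ => L/2) (Set.Ioi A) := by
      refine (h2.integrableOn).mono' aestronglyMeasurable_const ?_
      filter_upwards [ae_restrict_mem (measurableSet_Ioi (a := A))] with x hx
      rw [Real.norm_eq_abs, abs_of_pos (half_pos hLpos)]
      exact (hA x hx.le).le
    rw [integrableOn_const_iff] at hconst
    rcases hconst with h | h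
    · simp at h; linarith
    · simp [Real.volume_Ioi] at h
  rw [← hL0]
  exact htend

lemma normsq_le_of_integrable (hd : Differentiable ℝ ψ)
    (h2 : Integrable (fun ξ : ℝ => ‖ψ ξ‖ ^ 2))
    (hD : Integrable (fun ξ : ℝ => ‖deriv ψ ξ‖ ^ 2)) {ε : ℝ} (hε : 0 < ε) (x : ℝ) :
    ‖ψ x‖^2 ≤ ε * (∫ ξ : ℝ, ‖deriv ψ ξ‖ ^ 2) + (1/ε) * (∫ ξ : ℝ, ‖ψ ξ‖ ^ 2) := by
  have hG := Gf_integrable hd h2 hD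
  have hftc : ∀ y : ℝ, ∫ t in x..y, Gf ψ t = ‖ψ y‖^2 - ‖ψ x‖^2 := fun y =>
    intervalIntegral.integral_eq_sub_of_hasDerivAt
      (fun t _ => hasDerivAt_normsq hd t) (hG.intervalIntegrable)
  have hlim1 : Tendsto (fun y : ℝ => ∫ t in x..y, Gf ψ t) atTop
      (𝓝 (∫ t in Set.Ioi x, Gf ψ t)) :=
    intervalIntegral_tendsto_integral_Ioi x hG.integrableOn tendsto_id
  have hlim2 : Tendsto (fun y : ℝ => ∫ t in x..y, Gf ψ t) atTop (𝓝 (0 - ‖ψ x‖^2)) := by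
    have := (normsq_tendsto_zero hd h2 hD).sub_const (‖ψ x‖^2)
    refine this.congr fun y => (hftc y).symm
  have hrepr : ‖ψ x‖^2 = -∫ t in Set.Ioi x, Gf ψ t := by
    have := tendsto_nhds_unique hlim1 hlim2
    linarith [this]
  rw [hrepr]
  calc -∫ t in Set.Ioi x, Gf ψ t ≤ |∫ t in Set.Ioi x, Gf ψ t| := neg_le_abs _
    _ ≤ ∫ t in Set.Ioi x, |Gf ψ t| := by
        simpa [Real.norm_eq_abs] using
          norm_integral_le_integral_norm (μ := volume.restrict (Set.Ioi x)) (Gf ψ)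
    _ ≤ ∫ t : ℝ, |Gf ψ t| := by
        refine setIntegral_le_integral hG.abs ?_
        filter_upwards with t using abs_nonneg _
    _ ≤ ∫ t : ℝ, (ε * ‖deriv ψ t‖^2 + (1/ε) * ‖ψ t‖^2) := by
        refine integral_mono hG.abs ((hD.const_mul ε).add (h2.const_mul (1/ε))) ?_
        intro t
        exact G_abs_le hε t
    _ = ε * (∫ ξ : ℝ, ‖deriv ψ ξ‖ ^ 2) + (1/ε) * (∫ ξ : ℝ, ‖ψ ξ‖ ^ 2) := by
        rw [integral_add (hD.const_mul ε) (h2.const_mul (1/ε)),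
          MeasureTheory.integral_const_mul, MeasureTheory.integral_const_mul]

lemma four_le (hψ : InSigma1 ψ) {ε : ℝ} (hε : 0 < ε) :
    (∫ ξ : ℝ, ‖ψ ξ‖ ^ 4) ≤ ε * (∫ ξ : ℝ, ‖deriv ψ ξ‖ ^ 2) + 1/ε := by
  obtain ⟨⟨hd, h2, hD, hx2, h4⟩, hnorm⟩ := hψ
  set M := ε * (∫ ξ : ℝ, ‖deriv ψ ξ‖ ^ 2) + 1/ε with hM
  have hsup : ∀ x, ‖ψ x‖^2 ≤ M := by
    intro x
    have := normsq_le_of_integrable hd h2 hD hε x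
    rw [hnorm, mul_one] at this
    exact this
  calc (∫ ξ : ℝ, ‖ψ ξ‖ ^ 4) ≤ ∫ ξ : ℝ, M * ‖ψ ξ‖^2 := by
        refine integral_mono h4 (h2.const_mul M) fun ξ => ?_
        have h1 : ‖ψ ξ‖^4 = ‖ψ ξ‖^2 * ‖ψ ξ‖^2 := by ring
        rw [h1]
        exact mul_le_mul_of_nonneg_right (hsup ξ) (by positivity)
    _ = M := by rw [MeasureTheory.integral_const_mul, hnorm, mul_one]

lemma cos_term_integrable (hψ : InSigma1 ψ) (α : ℝ) :
    Integrable (fun ξ : ℝ => Real.cos (α * ξ) ^ 2 * ‖ψ ξ‖ ^ 2) := by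
  obtain ⟨⟨hd, h2, hD, hx2, h4⟩, hnorm⟩ := hψ
  refine h2.mono' ?_ ?_
  · exact (((Real.continuous_cos.comp (continuous_const.mul continuous_id)).pow 2).mul
      ((hd.continuous.norm).pow 2)).aestronglyMeasurable
  · filter_upwards with ξ
    rw [Real.norm_eq_abs, abs_mul, abs_of_nonneg (sq_nonneg _), abs_of_nonneg (by positivity)]
    have hc : Real.cos (α * ξ) ^ 2 ≤ 1 := cos_sq_le_one _
    nlinarith [sq_nonneg ‖ψ ξ‖]

lemma cos_term_bound (hψ : InSigma1 ψ) (V₀ α : ℝ) :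
    V₀ * (∫ ξ : ℝ, Real.cos (α * ξ) ^ 2 * ‖ψ ξ‖ ^ 2) ≤ |V₀| := by
  obtain ⟨⟨hd, h2, hD, hx2, h4⟩, hnorm⟩ := hψ
  have h0 : (0:ℝ) ≤ ∫ ξ : ℝ, Real.cos (α * ξ) ^ 2 * ‖ψ ξ‖ ^ 2 :=
    integral_nonneg fun ξ => by positivity
  have h1 : (∫ ξ : ℝ, Real.cos (α * ξ) ^ 2 * ‖ψ ξ‖ ^ 2) ≤ 1 := by
    rw [← hnorm]
    refine integral_mono (cos_term_integrable ⟨⟨hd, h2, hD, hx2, h4⟩, hnorm⟩ α) h2 fun ξ => ?_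
    have hc : Real.cos (α * ξ) ^ 2 ≤ 1 := cos_sq_le_one _
    nlinarith [sq_nonneg ‖ψ ξ‖]
  calc V₀ * (∫ ξ : ℝ, Real.cos (α * ξ) ^ 2 * ‖ψ ξ‖ ^ 2) ≤ |V₀| * 1 := by
        rcases le_or_gt 0 V₀ with h | h
        · rw [abs_of_nonneg h]
          exact mul_le_mul_of_nonneg_left h1 h
        · nlinarith [abs_nonneg V₀, neg_abs_le V₀]
    _ = |V₀| := mul_one _

lemma energy_lower (hψ : InSigma1 ψ) (lam V₀ α : ℝ) :
    -(lam^2/4) - |V₀| ≤ energy lam V₀ α ψ := by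
  obtain ⟨⟨hd, h2, hD, hx2, h4⟩, hnorm⟩ := hψ
  have hA : (0:ℝ) ≤ ∫ ξ : ℝ, ‖deriv ψ ξ‖ ^ 2 := integral_nonneg fun ξ => by positivity
  have hT : (0:ℝ) ≤ ∫ ξ : ℝ, ξ ^ 2 * ‖ψ ξ‖ ^ 2 := integral_nonneg fun ξ => by positivity
  have hQ : (0:ℝ) ≤ ∫ ξ : ℝ, ‖ψ ξ‖ ^ 4 := integral_nonneg fun ξ => by positivity
  have hV := cos_term_bound ⟨⟨hd, h2, hD, hx2, h4⟩, hnorm⟩ V₀ α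
  rw [energy]
  rcases le_or_gt 0 lam with hl | hl
  · nlinarith [sq_nonneg lam]
  · have hln : lam ≠ 0 := ne_of_lt hl
    have hε : (0:ℝ) < 2 / (-lam) := div_pos two_pos (by linarith)
    have h4b := four_le ⟨⟨hd, h2, hD, hx2, h4⟩, hnorm⟩ hε
    have key : lam / 2 * (∫ ξ : ℝ, ‖ψ ξ‖ ^ 4)
        ≥ -(∫ ξ : ℝ, ‖deriv ψ ξ‖ ^ 2) - lam^2/4 := by
      have h5 : lam / 2 * (∫ ξ : ℝ, ‖ψ ξ‖ ^ 4)
          ≥ lam / 2 * (2 / (-lam) * (∫ ξ : ℝ, ‖deriv ψ ξ‖ ^ 2) + 1/(2 / (-lam))) := by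
        apply mul_le_mul_of_nonpos_left h4b (by linarith)
      have heq : lam / 2 * (2 / (-lam) * (∫ ξ : ℝ, ‖deriv ψ ξ‖ ^ 2) + 1/(2 / (-lam)))
          = -(∫ ξ : ℝ, ‖deriv ψ ξ‖ ^ 2) - lam^2/4 := by
        have e1 : lam/2 * (2/(-lam)) = -1 := by
          field_simp
        have e2 : 1/(2/(-lam)) = -lam/2 := by
          rw [one_div_div]
        rw [mul_add, ← mul_assoc, e1, e2]
        ring
      linarith [h5, heq.ge]
    linarith

lemma energy_lower_atTop (hψ : InSigma1 ψ) {lam : ℝ} (hl : 0 < lam) (V₀ α : ℝ) :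
    3/16 * lam ^ ((2:ℝ)/3) - |V₀| ≤ energy lam V₀ α ψ := by
  obtain ⟨⟨hd, h2, hD, hx2, h4⟩, hnorm⟩ := hψ
  set R := lam ^ ((1:ℝ)/3) with hRdef
  have hR : 0 < R := Real.rpow_pos_of_pos hl _
  set s := Set.Icc (-R) R with hs
  have hms : MeasurableSet s := measurableSet_Icc
  set Q := ∫ ξ : ℝ, ‖ψ ξ‖ ^ 4 with hQdef
  set T := ∫ ξ : ℝ, ξ ^ 2 * ‖ψ ξ‖ ^ 2 with hTdef
  have hQ0 : 0 ≤ Q := integral_nonneg fun ξ => by positivity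
  have hT0 : 0 ≤ T := integral_nonneg fun ξ => by positivity
  have hA : (0:ℝ) ≤ ∫ ξ : ℝ, ‖deriv ψ ξ‖ ^ 2 := integral_nonneg fun ξ => by positivity
  have hV := cos_term_bound ⟨⟨hd, h2, hD, hx2, h4⟩, hnorm⟩ V₀ α
  -- split the mass
  have hsplit : (∫ ξ in s, ‖ψ ξ‖^2) + (∫ ξ in sᶜ, ‖ψ ξ‖^2) = 1 := by
    rw [integral_add_compl hms h2, hnorm]
  -- inside
  have h_in : (∫ ξ in s, ‖ψ ξ‖^2) ≤ 1/4 + 2*R*Q := by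
    have step1 : (∫ ξ in s, ‖ψ ξ‖^2) ≤ ∫ ξ in s, (1/(8*R) + 2*R*‖ψ ξ‖^4) := by
      refine setIntegral_mono_on h2.integrableOn
        (((integrableOn_const_iff (C := 1/(8*R))).mpr (Or.inr ?_)).add ((h4.integrableOn).const_mul _)) hms
        (fun ξ _ => ?_)
      · rw [hs, Real.volume_Icc]
        exact ENNReal.ofReal_lt_top
      · have hp : ‖ψ ξ‖^4 = (‖ψ ξ‖^2)^2 := by ring
        rw [hp]
        have expand : 1/(8*R) + 2*R*(‖ψ ξ‖^2)^2 - ‖ψ ξ‖^2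
            = (4*R*‖ψ ξ‖^2-1)^2/(8*R) := by
          field_simp
          ring
        have hnn : 0 ≤ (4*R*‖ψ ξ‖^2-1)^2/(8*R) := by positivity
        linarith
    have step2 : (∫ ξ in s, (1/(8*R) + 2*R*‖ψ ξ‖^4)) = 1/4 + 2*R*(∫ ξ in s, ‖ψ ξ‖^4) := by
      rw [integral_add ((integrableOn_const_iff (C := 1/(8*R))).mpr (Or.inr (by rw [hs, Real.volume_Icc]; exact ENNReal.ofReal_lt_top)))
        ((h4.integrableOn).const_mul _), setIntegral_const, MeasureTheory.integral_const_mul,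
        hs, Real.volume_real_Icc, smul_eq_mul, max_eq_left (by linarith)]
      have : (R - -R) * (1/(8*R)) = 1/4 := by
        field_simp
        ring
      rw [this]
    have step3 : (∫ ξ in s, ‖ψ ξ‖^4) ≤ Q :=
      setIntegral_le_integral h4 (Filter.Eventually.of_forall fun ξ => by positivity)
    calc (∫ ξ in s, ‖ψ ξ‖^2) ≤ 1/4 + 2*R*(∫ ξ in s, ‖ψ ξ‖^4) := by rw [← step2]; exact step1
      _ ≤ 1/4 + 2*R*Q := by nlinarith [hR, step3]
  -- outside
  have h_out : (∫ ξ in sᶜ, ‖ψ ξ‖^2) ≤ (1/R^2) * T := by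
    have step1 : (∫ ξ in sᶜ, ‖ψ ξ‖^2) ≤ ∫ ξ in sᶜ, (1/R^2) * (ξ^2 * ‖ψ ξ‖^2) := by
      refine setIntegral_mono_on h2.integrableOn ((hx2.integrableOn).const_mul _)
        hms.compl (fun ξ hξ => ?_)
      have hout : R^2 ≤ ξ^2 := by
        rcases not_and_or.mp ((Set.mem_Icc).not.mp hξ) with h | h
        · push_neg at h; nlinarith
        · push_neg at h; nlinarith
      have hg0 : (0:ℝ) ≤ ‖ψ ξ‖^2 := by positivity
      rw [show (1/R^2) * (ξ^2 * ‖ψ ξ‖^2) = (ξ^2/R^2) * ‖ψ ξ‖^2 by ring]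
      have hfrac : 1 ≤ ξ^2/R^2 := (one_le_div (by positivity)).mpr hout
      exact le_mul_of_one_le_left hg0 hfrac
    have step2 : (∫ ξ in sᶜ, (1/R^2) * (ξ^2 * ‖ψ ξ‖^2)) ≤ (1/R^2) * T := by
      rw [MeasureTheory.integral_const_mul]
      have := setIntegral_le_integral (s := sᶜ) hx2 (Filter.Eventually.of_forall
        (fun ξ => by positivity) : 0 ≤ᵐ[volume] fun ξ : ℝ => ξ^2*‖ψ ξ‖^2)
      have h1R : (0:ℝ) ≤ 1/R^2 := by positivity
      exact mul_le_mul_of_nonneg_left (this.trans_eq (by rw [hTdef])) h1R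
    exact step1.trans step2
  have hconstr : 3/4 ≤ 2*R*Q + (1/R^2)*T := by linarith
  -- arithmetic with rpow
  have hR2 : R^2 = lam ^ ((2:ℝ)/3) := by
    rw [hRdef, ← Real.rpow_natCast (lam ^ ((1:ℝ)/3)) 2, ← Real.rpow_mul hl.le]
    norm_num
  have hRlam : lam ^ ((2:ℝ)/3) * R = lam := by
    rw [hRdef, ← Real.rpow_add hl]
    norm_num
  set μ := lam ^ ((2:ℝ)/3) / 4 with hμ
  have hμpos : 0 < μ := by
    have := Real.rpow_pos_of_pos hl ((2:ℝ)/3)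
    positivity
  have key : μ * (3/4) ≤ T + lam/2 * Q := by
    have k1 : μ * (2*R*Q) = lam/2 * Q := by
      rw [hμ]
      linear_combination (Q/2) * hRlam
    have k2 : μ * ((1/R^2)*T) ≤ T := by
      have hμleR2 : μ ≤ R^2 := by
        rw [hR2, hμ]
        linarith [Real.rpow_pos_of_pos hl ((2:ℝ)/3)]
      have : μ * ((1/R^2)*T) = (μ/R^2) * T := by ring
      rw [this]
      have hfrac : μ/R^2 ≤ 1 := (div_le_one (by positivity)).mpr hμleR2
      exact mul_le_of_le_one_left hT0 hfrac
    calc μ * (3/4) ≤ μ * (2*R*Q + (1/R^2)*T) :=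
        mul_le_mul_of_nonneg_left hconstr hμpos.le
      _ = μ * (2*R*Q) + μ * ((1/R^2)*T) := by ring
      _ ≤ lam/2 * Q + T := by linarith [k1.le, k2]
      _ = T + lam/2 * Q := by ring
  rw [energy]
  have : μ * (3/4) = 3/16 * lam ^ ((2:ℝ)/3) := by rw [hμ]; ring
  linarith

lemma energy_affine (V₀ α t s a b : ℝ) (hts : t + s = 1) (ψ : ℝ → ℂ) :
    energy (t*a + s*b) V₀ α ψ = t * energy a V₀ α ψ + s * energy b V₀ α ψ := by
  simp only [energy]
  linear_combination (V₀ * (∫ ξ : ℝ, Real.cos (α * ξ) ^ 2 * ‖ψ ξ‖ ^ 2)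
    - (∫ ξ : ℝ, ‖deriv ψ ξ‖ ^ 2) - (∫ ξ : ℝ, ξ ^ 2 * ‖ψ ξ‖ ^ 2)) * hts

lemma energy_split (lam V₀ α : ℝ) (ψ : ℝ → ℂ) :
    energy lam V₀ α ψ = energy 0 V₀ α ψ + lam/2 * (∫ ξ : ℝ, ‖ψ ξ‖ ^ 4) := by
  simp only [energy]
  ring

lemma eset_nonempty (V₀ α lam : ℝ) :
    {e : ℝ | ∃ ψ : ℝ → ℂ, InSigma1 ψ ∧ energy lam V₀ α ψ = e}.Nonempty :=
  ⟨energy lam V₀ α gauss, gauss, gauss_inSigma1, rfl⟩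

lemma eset_bddBelow (V₀ α lam : ℝ) :
    BddBelow {e : ℝ | ∃ ψ : ℝ → ℂ, InSigma1 ψ ∧ energy lam V₀ α ψ = e} := by
  refine ⟨-(lam^2/4) - |V₀|, ?_⟩
  rintro e ⟨ψ, hψ, rfl⟩
  exact energy_lower hψ lam V₀ α

lemma Emin_le (V₀ α lam : ℝ) {ψ : ℝ → ℂ} (hψ : InSigma1 ψ) :
    Emin V₀ α lam ≤ energy lam V₀ α ψ :=
  csInf_le (eset_bddBelow V₀ α lam) ⟨ψ, hψ, rfl⟩

lemma Emin_concave (V₀ α : ℝ) : ConcaveOn ℝ Set.univ (Emin V₀ α) := by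
  refine ⟨convex_univ, ?_⟩
  intro x _ y _ t s ht hs hts
  simp only [smul_eq_mul]
  refine le_csInf (eset_nonempty V₀ α _) ?_
  rintro e ⟨ψ, hψ, rfl⟩
  rw [energy_affine V₀ α t s x y hts ψ]
  have h1 := Emin_le V₀ α x hψ
  have h2 := Emin_le V₀ α y hψ
  have := mul_le_mul_of_nonneg_left h1 ht
  have := mul_le_mul_of_nonneg_left h2 hs
  linarith

theorem Emin_continuous_concave_limits (V₀ α : ℝ) :
    Continuous (Emin V₀ α) ∧
    ConcaveOn ℝ Set.univ (Emin V₀ α) ∧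
    Tendsto (Emin V₀ α) atTop atTop ∧
    Tendsto (Emin V₀ α) atBot atBot := by
  have hconc := Emin_concave V₀ α
  refine ⟨?_, hconc, ?_, ?_⟩
  · rw [← continuousOn_univ]
    exact hconc.continuousOn isOpen_univ
  · -- atTop
    have hmono : ∀ᶠ lam in (atTop : Filter ℝ),
        3/16 * lam ^ ((2:ℝ)/3) - |V₀| ≤ Emin V₀ α lam := by
      filter_upwards [eventually_gt_atTop (0:ℝ)] with lam hlam
      refine le_csInf (eset_nonempty V₀ α lam) ?_
      rintro e ⟨ψ, hψ, rfl⟩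
      exact energy_lower_atTop hψ hlam V₀ α
    have hG : Tendsto (fun lam : ℝ => 3/16 * lam ^ ((2:ℝ)/3) - |V₀|) atTop atTop := by
      apply tendsto_atTop_add_const_right
      exact (tendsto_rpow_atTop (by norm_num)).const_mul_atTop (by norm_num)
    exact tendsto_atTop_mono' atTop hmono hG
  · -- atBot
    have hub : ∀ lam : ℝ, Emin V₀ α lam
        ≤ energy 0 V₀ α gauss + lam/2 * (∫ ξ : ℝ, ‖gauss ξ‖ ^ 4) := fun lam => by
      rw [← energy_split]
      exact Emin_le V₀ α lam gauss_inSigma1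
    have hG : Tendsto (fun lam : ℝ => energy 0 V₀ α gauss
        + lam/2 * (∫ ξ : ℝ, ‖gauss ξ‖ ^ 4)) atBot atBot := by
      apply tendsto_atBot_add_const_left
      have h : Tendsto (fun lam : ℝ => lam/2) atBot atBot :=
        tendsto_id.atBot_div_const two_pos
      exact h.atBot_mul_const gauss_four_pos
    exact tendsto_atBot_mono hub hG
end

section
/- Let λ₁ < λ₂ and let ψᵢ ∈ G_{λᵢ} be minimizers of E_{λᵢ} over Σ₁, i = 1,2. Then ‖ψ₂‖_{L⁴} ≤ ‖ψ₁‖_{L⁴}. (The L⁴ norm of ground states is nonincreasing in the interaction parameter.) -/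
open MeasureTheory Real

theorem L4_norm_of_ground_state_antitone (lam₁ lam₂ V₀ α : ℝ) (hlt : lam₁ < lam₂)
    (ψ₁ ψ₂ : ℝ → ℂ)
    (h₁ : IsGroundState lam₁ V₀ α ψ₁) (h₂ : IsGroundState lam₂ V₀ α ψ₂) :
    (∫ ξ : ℝ, ‖ψ₂ ξ‖ ^ 4) ^ ((1 : ℝ) / 4) ≤ (∫ ξ : ℝ, ‖ψ₁ ξ‖ ^ 4) ^ ((1 : ℝ) / 4) := by
  have ha := h₁.2 ψ₂ h₂.1
  have hb := h₂.2 ψ₁ h₁.1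
  have hkey : (∫ ξ : ℝ, ‖ψ₂ ξ‖ ^ 4) ≤ (∫ ξ : ℝ, ‖ψ₁ ξ‖ ^ 4) := by
    unfold energy at ha hb
    nlinarith [hlt]
  have h2 : (0:ℝ) ≤ ∫ ξ : ℝ, ‖ψ₂ ξ‖ ^ 4 :=
    integral_nonneg fun ξ => by positivity
  exact Real.rpow_le_rpow h2 hkey (by norm_num)
end
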